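/- Fix ε∈Char_ℝ(Q⁺). Then the complex vector space g_ε={(S_ε⁺(z),S_ε⁻(z)) : z∈g} is a Lie *-subalgebra of the direct sum Lie algebra g⊕g equipped with the involution (w,z)^*=(z^†,w^†); moreover dim_ℂ(g_ε)=dim_ℂ(g). -/

import Mathlib

noncomputable section

/-- let `g` be a complex simple Lie algebra with Cartan decomposition
`g = n⁻ ⊕ h ⊕ n⁺`, compact-form involution `†`, root vectors `X_α^±` (for `α ∈ Δ⁺`,
with coordinates `coord α` in the simple roots) and `{h_r}` the basis of `h` dual to
the fundamental weights, and let `ε ∈ Char_ℝ(Q⁺)`.  With `S_ε^±` the linear maps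
scaling `X_α^±` by `ε_α = ∏_r ε_r^{(coord α)_r}` and fixing `h + n^∓`, the space
`g_ε = {(S_ε⁺ z, S_ε⁻ z) : z ∈ g}` is a Lie `*`-subalgebra of `g ⊕ g` for the
involution `(w,z)^* = (z^†, w^†)`, and `dim_ℂ g_ε = dim_ℂ g`.  (Closure under the
componentwise bracket and the involution is expressed pointwise, and `g_ε` is the
range of `z ↦ (S_ε⁺ z, S_ε⁻ z)`.) -/
theorem statement19
    (l : ℕ) (hl : 0 < l)
    -- the set Δ⁺ of positive roots, with coordinates in terms of the simple roots
    (PosRoot : Type) [Fintype PosRoot]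
    (simp_root : Fin l → PosRoot)
    (coord : PosRoot → Fin l → ℕ)
    (hcoord_simple : ∀ r, coord (simp_root r) = Pi.single r 1)
    (hcoord_inj : Function.Injective coord)
    -- the complex simple Lie algebra g with its root space decomposition
    (L : Type) [LieRing L] [LieAlgebra ℂ L]
    (Xp Xm : PosRoot → L) (hvec : Fin l → L)
    (bas : Module.Basis ((PosRoot ⊕ PosRoot) ⊕ Fin l) ℂ L)
    (hbas : ∀ i, bas i = Sum.elim (Sum.elim Xp Xm) hvec i)
    (hsimple_bracket : ∀ r, ⁅Xp (simp_root r), Xm (simp_root r)⁆ = hvec r)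
    (h_comm : ∀ r s, ⁅hvec r, hvec s⁆ = 0)
    (root_eigen : ∃ rt : PosRoot → Fin l → ℂ, ∀ α r,
      ⁅hvec r, Xp α⁆ = rt α r • Xp α ∧ ⁅hvec r, Xm α⁆ = -(rt α r) • Xm α)
    (hpp : ∀ α β, (∃ γ, ∃ N : ℂ, coord γ = coord α + coord β ∧ ⁅Xp α, Xp β⁆ = N • Xp γ)
      ∨ ⁅Xp α, Xp β⁆ = 0)
    (hmm : ∀ α β, (∃ γ, ∃ N : ℂ, coord γ = coord α + coord β ∧ ⁅Xm α, Xm β⁆ = N • Xm γ)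
      ∨ ⁅Xm α, Xm β⁆ = 0)
    (hpm : ∀ α β,
      (α = β ∧ ⁅Xp α, Xm β⁆ ∈ Submodule.span ℂ (Set.range hvec)) ∨
      (∃ γ, ∃ N : ℂ, coord α = coord β + coord γ ∧ ⁅Xp α, Xm β⁆ = N • Xp γ) ∨
      (∃ γ, ∃ N : ℂ, coord β = coord α + coord γ ∧ ⁅Xp α, Xm β⁆ = N • Xm γ) ∨
      ⁅Xp α, Xm β⁆ = 0)
    -- the compact-form involution †
    (dag : L → L)
    (dag_add : ∀ x y, dag (x + y) = dag x + dag y)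
    (dag_smul : ∀ (c : ℂ) (x : L), dag (c • x) = (starRingEnd ℂ c) • dag x)
    (dag_bracket : ∀ x y, dag ⁅x, y⁆ = -⁅dag x, dag y⁆)
    (dag_invol : ∀ x, dag (dag x) = x)
    (dag_Xp : ∀ α, dag (Xp α) = Xm α)
    (dag_h : ∀ r, dag (hvec r) = hvec r)
    -- the character ε and the maps S_ε^±
    (ε : Fin l → ℝ)
    (Sp Sm : L →ₗ[ℂ] L)
    (hSp_Xp : ∀ α, Sp (Xp α) = (((∏ r, ε r ^ (coord α r) : ℝ)) : ℂ) • Xp α)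
    (hSp_Xm : ∀ α, Sp (Xm α) = Xm α) (hSp_h : ∀ r, Sp (hvec r) = hvec r)
    (hSm_Xm : ∀ α, Sm (Xm α) = (((∏ r, ε r ^ (coord α r) : ℝ)) : ℂ) • Xm α)
    (hSm_Xp : ∀ α, Sm (Xp α) = Xp α) (hSm_h : ∀ r, Sm (hvec r) = hvec r) :
    -- g_ε is closed under the (componentwise) Lie bracket of g ⊕ g
    (∀ z w : L, ∃ u : L, ⁅Sp z, Sp w⁆ = Sp u ∧ ⁅Sm z, Sm w⁆ = Sm u) ∧
    -- g_ε is closed under the involution (w,z)^* = (z†,w†)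
    (∀ z : L, ∃ u : L, dag (Sm z) = Sp u ∧ dag (Sp z) = Sm u) ∧
    -- dim_ℂ(g_ε) = dim_ℂ(g)
    Module.finrank ℂ ↥(LinearMap.range (LinearMap.prod Sp Sm)) = Module.finrank ℂ L := by
  classical
  obtain ⟨rt, hrt⟩ := root_eigen
  set e : PosRoot → ℂ := fun α => (((∏ r, ε r ^ (coord α r) : ℝ)) : ℂ) with he
  have hSpXp : ∀ α, Sp (Xp α) = e α • Xp α := hSp_Xp
  have hSmXm : ∀ α, Sm (Xm α) = e α • Xm α := hSm_Xm
  have emul : ∀ α β γ, coord γ = coord α + coord β → e γ = e α * e β := by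
    intro α β γ h
    simp only [he, h, Pi.add_apply, pow_add, ← Complex.ofReal_mul,
      ← Finset.prod_mul_distrib]
  have hspanP : ∀ x ∈ Submodule.span ℂ (Set.range hvec), Sp x = x := by
    intro x hx
    induction hx using Submodule.span_induction with
    | mem x hx => obtain ⟨r, rfl⟩ := hx; exact hSp_h r
    | zero => simp
    | add x y _ _ hx hy => rw [map_add, hx, hy]
    | smul c x _ hx => rw [map_smul, hx]
  have hspanM : ∀ x ∈ Submodule.span ℂ (Set.range hvec), Sm x = x := by
    intro x hx
    induction hx using Submodule.span_induction with
    | mem x hx => obtain ⟨r, rfl⟩ := hx; exact hSm_h r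
    | zero => simp
    | add x y _ _ hx hy => rw [map_add, hx, hy]
    | smul c x _ hx => rw [map_smul, hx]
  -- mixed-case lemma
  have hmix : ∀ α β, ∃ u : L, ⁅Sp (Xp α), Sp (Xm β)⁆ = Sp u ∧
      ⁅Sm (Xp α), Sm (Xm β)⁆ = Sm u := by
    intro α β
    rcases hpm α β with ⟨heq, hmem⟩ | ⟨γ, N, hγ, hbr⟩ | ⟨γ, N, hγ, hbr⟩ | hbr
    · subst heq
      refine ⟨e α • ⁅Xp α, Xm α⁆, ?_, ?_⟩
      · rw [hSpXp, hSp_Xm, smul_lie, map_smul, hspanP _ hmem]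
      · rw [hSm_Xp, hSmXm, lie_smul, map_smul, hspanM _ hmem]
    · refine ⟨(N * e β) • Xp γ, ?_, ?_⟩
      · rw [hSpXp, hSp_Xm, smul_lie, hbr, map_smul, hSpXp, emul β γ α hγ]
        simp only [smul_smul]; congr 1; ring
      · rw [hSm_Xp, hSmXm, lie_smul, hbr, map_smul, hSm_Xp]
        simp only [smul_smul]; congr 1; ring
    · refine ⟨(N * e α) • Xm γ, ?_, ?_⟩
      · rw [hSpXp, hSp_Xm, smul_lie, hbr, map_smul, hSp_Xm]
        simp only [smul_smul]; congr 1; ring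
      · rw [hSm_Xp, hSmXm, lie_smul, hbr, map_smul, hSmXm, emul α γ β hγ]
        simp only [smul_smul]; congr 1; ring
    · refine ⟨0, ?_, ?_⟩
      · rw [hSpXp, hSp_Xm, smul_lie, hbr, smul_zero, map_zero]
      · rw [hSm_Xp, hSmXm, lie_smul, hbr, smul_zero, map_zero]
  have hhp : ∀ r α, ∃ u : L, ⁅Sp (hvec r), Sp (Xp α)⁆ = Sp u ∧
      ⁅Sm (hvec r), Sm (Xp α)⁆ = Sm u := by
    intro r α
    refine ⟨rt α r • Xp α, ?_, ?_⟩
    · rw [hSp_h, hSpXp, lie_smul, (hrt α r).1, map_smul, hSpXp]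
      simp only [smul_smul]; congr 1; ring
    · rw [hSm_h, hSm_Xp, (hrt α r).1, map_smul, hSm_Xp]
  have hhm : ∀ r α, ∃ u : L, ⁅Sp (hvec r), Sp (Xm α)⁆ = Sp u ∧
      ⁅Sm (hvec r), Sm (Xm α)⁆ = Sm u := by
    intro r α
    refine ⟨(-(rt α r)) • Xm α, ?_, ?_⟩
    · rw [hSp_h, hSp_Xm, (hrt α r).2, map_smul, hSp_Xm]
    · rw [hSm_h, hSmXm, lie_smul, (hrt α r).2, map_smul, hSmXm]
      simp only [smul_smul]; congr 1; ring
  have key : ∀ i j, ∃ u : L, ⁅Sp (bas i), Sp (bas j)⁆ = Sp u ∧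
      ⁅Sm (bas i), Sm (bas j)⁆ = Sm u := by
    intro i j
    obtain (α | α) | r := i <;> obtain (β | β) | s := j <;>
      simp only [hbas, Sum.elim_inl, Sum.elim_inr]
    · -- Xp Xp
      rcases hpp α β with ⟨γ, N, hγ, hbr⟩ | hbr
      · refine ⟨N • Xp γ, ?_, ?_⟩
        · rw [hSpXp, hSpXp, smul_lie, lie_smul, hbr, map_smul, hSpXp,
            emul α β γ hγ]
          simp only [smul_smul]; congr 1; ring
        · rw [hSm_Xp, hSm_Xp, hbr, map_smul, hSm_Xp]
      · refine ⟨0, ?_, ?_⟩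
        · rw [hSpXp, hSpXp, smul_lie, lie_smul, hbr, smul_zero, smul_zero, map_zero]
        · rw [hSm_Xp, hSm_Xp, hbr, map_zero]
    · exact hmix α β
    · -- Xp h
      obtain ⟨u, h1, h2⟩ := hhp s α
      exact ⟨-u, by rw [← lie_skew, h1, map_neg], by rw [← lie_skew, h2, map_neg]⟩
    · -- Xm Xp
      obtain ⟨u, h1, h2⟩ := hmix β α
      exact ⟨-u, by rw [← lie_skew, h1, map_neg], by rw [← lie_skew, h2, map_neg]⟩
    · -- Xm Xm
      rcases hmm α β with ⟨γ, N, hγ, hbr⟩ | hbr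
      · refine ⟨N • Xm γ, ?_, ?_⟩
        · rw [hSp_Xm, hSp_Xm, hbr, map_smul, hSp_Xm]
        · rw [hSmXm, hSmXm, smul_lie, lie_smul, hbr, map_smul, hSmXm,
            emul α β γ hγ]
          simp only [smul_smul]; congr 1; ring
      · refine ⟨0, ?_, ?_⟩
        · rw [hSp_Xm, hSp_Xm, hbr, map_zero]
        · rw [hSmXm, hSmXm, smul_lie, lie_smul, hbr, smul_zero, smul_zero, map_zero]
    · -- Xm h
      obtain ⟨u, h1, h2⟩ := hhm s α
      exact ⟨-u, by rw [← lie_skew, h1, map_neg], by rw [← lie_skew, h2, map_neg]⟩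
    · exact hhp r β
    · exact hhm r β
    · -- h h
      refine ⟨0, ?_, ?_⟩
      · rw [hSp_h, hSp_h, h_comm, map_zero]
      · rw [hSm_h, hSm_h, h_comm, map_zero]
  have lie_sum' : ∀ (s : Finset ((PosRoot ⊕ PosRoot) ⊕ Fin l)) (y : L)
      (f : ((PosRoot ⊕ PosRoot) ⊕ Fin l) → L),
      ⁅y, ∑ i ∈ s, f i⁆ = ∑ i ∈ s, ⁅y, f i⁆ := by
    intro s y f
    induction s using Finset.induction with
    | empty => simp
    | insert a s h ih => rw [Finset.sum_insert h, Finset.sum_insert h, lie_add, ih]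
  have sum_lie' : ∀ (s : Finset ((PosRoot ⊕ PosRoot) ⊕ Fin l)) (y : L)
      (f : ((PosRoot ⊕ PosRoot) ⊕ Fin l) → L),
      ⁅∑ i ∈ s, f i, y⁆ = ∑ i ∈ s, ⁅f i, y⁆ := by
    intro s y f
    induction s using Finset.induction with
    | empty => simp
    | insert a s h ih => rw [Finset.sum_insert h, Finset.sum_insert h, add_lie, ih]
  choose u₀ hu1 hu2 using key
  have FD : FiniteDimensional ℂ L := Module.Finite.of_basis bas
  refine ⟨?_, ?_, ?_⟩
  · -- bracket closure
    intro z w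
    refine ⟨∑ i, ∑ j, (bas.repr z i * bas.repr w j) • u₀ i j, ?_, ?_⟩
    · conv_lhs => rw [← bas.sum_repr z, ← bas.sum_repr w]
      simp only [map_sum, map_smul, sum_lie', lie_sum', smul_lie, lie_smul,
        smul_smul, hu1]
      exact Finset.sum_congr rfl fun i _ => Finset.sum_congr rfl fun j _ => by
        rw [mul_comm]
    · conv_lhs => rw [← bas.sum_repr z, ← bas.sum_repr w]
      simp only [map_sum, map_smul, sum_lie', lie_sum', smul_lie, lie_smul,
        smul_smul, hu2]
      exact Finset.sum_congr rfl fun i _ => Finset.sum_congr rfl fun j _ => by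
        rw [mul_comm]
  · -- involution closure
    have dagXm : ∀ α, dag (Xm α) = Xp α := by
      intro α; rw [← dag_Xp α, dag_invol]
    let F : L →ₗ[ℂ] L :=
      { toFun := fun z => dag (Sm (dag z))
        map_add' := by
          intro x y
          show dag (Sm (dag (x + y))) = dag (Sm (dag x)) + dag (Sm (dag y))
          rw [dag_add, map_add, dag_add]
        map_smul' := by
          intro c x
          show dag (Sm (dag (c • x))) = (RingHom.id ℂ) c • dag (Sm (dag x))
          rw [dag_smul, map_smul, dag_smul, Complex.conj_conj]
          rfl }
    let G : L →ₗ[ℂ] L :=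
      { toFun := fun z => dag (Sp (dag z))
        map_add' := by
          intro x y
          show dag (Sp (dag (x + y))) = dag (Sp (dag x)) + dag (Sp (dag y))
          rw [dag_add, map_add, dag_add]
        map_smul' := by
          intro c x
          show dag (Sp (dag (c • x))) = (RingHom.id ℂ) c • dag (Sp (dag x))
          rw [dag_smul, map_smul, dag_smul, Complex.conj_conj]
          rfl }
    have hconj : ∀ α, (starRingEnd ℂ) (e α) = e α := by
      intro α; simp [he]
    have hF : F = Sp := by
      refine bas.ext fun i => ?_
      obtain (α | α) | r := i <;> simp only [hbas, Sum.elim_inl, Sum.elim_inr]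
      · show dag (Sm (dag (Xp α))) = _
        rw [dag_Xp, hSmXm, dag_smul, dagXm, hconj, hSpXp]
      · show dag (Sm (dag (Xm α))) = _
        rw [dagXm, hSm_Xp, dag_Xp, hSp_Xm]
      · show dag (Sm (dag (hvec r))) = _
        rw [dag_h, hSm_h, dag_h, hSp_h]
    have hG : G = Sm := by
      refine bas.ext fun i => ?_
      obtain (α | α) | r := i <;> simp only [hbas, Sum.elim_inl, Sum.elim_inr]
      · show dag (Sp (dag (Xp α))) = _
        rw [dag_Xp, hSp_Xm, dagXm, hSm_Xp]
      · show dag (Sp (dag (Xm α))) = _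
        rw [dagXm, hSpXp, dag_smul, dag_Xp, hconj, hSmXm]
      · show dag (Sp (dag (hvec r))) = _
        rw [dag_h, hSp_h, dag_h, hSm_h]
    intro z
    refine ⟨dag z, ?_, ?_⟩
    · have h1 : F (dag z) = Sp (dag z) := by rw [hF]
      have h2 : F (dag z) = dag (Sm z) := by
        show dag (Sm (dag (dag z))) = dag (Sm z)
        rw [dag_invol]
      rw [← h2, h1]
    · have h1 : G (dag z) = Sm (dag z) := by rw [hG]
      have h2 : G (dag z) = dag (Sp z) := by
        show dag (Sp (dag (dag z))) = dag (Sp z)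
        rw [dag_invol]
      rw [← h2, h1]
  · -- dimension
    have hXpb : ∀ α, Xp α = bas (Sum.inl (Sum.inl α)) := by
      intro α; simp [hbas]
    have hXmb : ∀ α, Xm α = bas (Sum.inl (Sum.inr α)) := by
      intro α; simp [hbas]
    have hhb : ∀ r, hvec r = bas (Sum.inr r) := by
      intro r; simp [hbas]
    have hT : ((bas.constr ℂ (Sum.elim (Sum.elim (fun _ => (0 : L)) Xm) hvec)).comp Sp
        + (bas.constr ℂ (Sum.elim (Sum.elim Xp (fun _ => (0 : L)))
            (fun _ => (0 : L)))).comp Sm) = LinearMap.id := by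
      refine bas.ext fun i => ?_
      simp only [LinearMap.add_apply, LinearMap.comp_apply, LinearMap.id_apply]
      obtain (α | α) | r := i <;> simp only [hbas, Sum.elim_inl, Sum.elim_inr]
      · rw [hSpXp, hSm_Xp, map_smul, hXpb α, Module.Basis.constr_basis, Module.Basis.constr_basis]
        simp [hXpb α]
      · rw [hSp_Xm, hSmXm, map_smul, hXmb α, Module.Basis.constr_basis, Module.Basis.constr_basis]
        simp [hXmb α]
      · rw [hSp_h, hSm_h, hhb r, Module.Basis.constr_basis, Module.Basis.constr_basis]
        simp [hhb r]
    have hinj : Function.Injective (LinearMap.prod Sp Sm) := by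
      intro x y hxy
      have h1 : Sp x = Sp y := congrArg Prod.fst hxy
      have h2 : Sm x = Sm y := congrArg Prod.snd hxy
      have hx := congrArg (fun f : L →ₗ[ℂ] L => f x) hT
      have hy := congrArg (fun f : L →ₗ[ℂ] L => f y) hT
      simp only [LinearMap.add_apply, LinearMap.comp_apply, LinearMap.id_apply] at hx hy
      rw [← hx, ← hy, h1, h2]
    exact LinearMap.finrank_range_of_inj hinj
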